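/- Let Γ = (V, E) be a graph and F a flat of its graphic matroid, and let S be a spanning forest of Γ[F] in which all edges have distinct larger endpoints. Consider the matrix M_F over ℚ with rows indexed by edges e ∈ F and columns indexed by V in decreasing order, with (M_F)_{e,h(e)} = 1, (M_F)_{e,t(e)} = -1, and all other entries 0. Then the row space of M_F equals the row space of the submatrix with rows indexed by S, and this submatrix has rank |S| with pivot columns exactly {h(e) : e ∈ S}. -/

import Mathlib

open SimpleGraph

section Defs

variable {V : Type*}

/-- The larger endpoint (head) of an edge, with respect to a linear order on vertices. -/
def esup [LinearOrder V] (e : Sym2 V) : V :=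
  Sym2.lift ⟨fun a b => a ⊔ b, fun a b => sup_comm a b⟩ e

/-- The smaller endpoint (tail) of an edge. -/
def einf [LinearOrder V] (e : Sym2 V) : V :=
  Sym2.lift ⟨fun a b => a ⊓ b, fun a b => inf_comm a b⟩ e

/-- The order on edges induced by a linear order on vertices:
`e < e'` iff `h(e) < h(e')`, or `h(e) = h(e')` and `t(e) < t(e')`. -/
def edgeLT [LinearOrder V] (e f : Sym2 V) : Prop :=
  esup e < esup f ∨ (esup e = esup f ∧ einf e < einf f)

/-- The linear order on the vertices is a perfect elimination ordering: every vertex is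
simplicial in the induced subgraph on the vertices below it. -/
def IsPEO [LinearOrder V] (G : SimpleGraph V) : Prop :=
  ∀ v u w : V, u < v → w < v → u ≠ w → G.Adj u v → G.Adj w v → G.Adj u w

/-- A cycle (walk) in a graph has a chord. -/
def SimpleGraph.Walk.HasChord {G : SimpleGraph V} {v : V} (c : G.Walk v v) : Prop :=
  ∃ a b : V, a ∈ c.support ∧ b ∈ c.support ∧ G.Adj a b ∧ s(a, b) ∉ c.edges

/-- A graph is chordal if every cycle with more than three vertices has a chord. -/
def SimpleGraph.IsChordal (G : SimpleGraph V) : Prop :=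
  ∀ (v : V) (c : G.Walk v v), c.IsCycle → 3 < c.length → c.HasChord

/-- `S` is the edge set of a cycle of `G`. -/
def IsCycleEdges [DecidableEq V] (G : SimpleGraph V) (S : Finset (Sym2 V)) : Prop :=
  ∃ (v : V) (c : G.Walk v v), c.IsCycle ∧ c.edges.toFinset = S

/-- `S` is a broken circuit: there is an edge `e` smaller than every element of `S` such that
`S ∪ {e}` is the edge set of a cycle. -/
def IsBrokenCircuit [LinearOrder V] (G : SimpleGraph V) (S : Finset (Sym2 V)) : Prop :=
  ∃ e : Sym2 V, e ∉ S ∧ (∀ f ∈ S, edgeLT e f) ∧ IsCycleEdges G (insert e S)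

/-- `S` is an nbc set: a set of edges of `G` no subset of which is a broken circuit. -/
def IsNBC [LinearOrder V] (G : SimpleGraph V) (S : Finset (Sym2 V)) : Prop :=
  ↑S ⊆ G.edgeSet ∧ ∀ T ⊆ S, ¬IsBrokenCircuit G T

end Defs

/-- `S` spans the subgraph `Γ[F]`. -/
def SpansFlat {V : Type*} (F S : Set (Sym2 V)) : Prop :=
  ∀ u w : V, s(u, w) ∈ F → (SimpleGraph.fromEdgeSet S).Reachable u w

/-- The row of the matrix `M_F` indexed by an edge `e`: entry `1` in column `h(e)`,
entry `-1` in column `t(e)`, and `0` elsewhere. -/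
noncomputable def edgeRow {V : Type*} [LinearOrder V] (e : Sym2 V) : V → ℚ :=
  fun v => if v = esup e then 1 else if v = einf e then -1 else 0

section Aux

variable {V : Type*} [LinearOrder V]

lemma esup_mk (a b : V) : esup s(a, b) = a ⊔ b := rfl

lemma einf_mk (a b : V) : einf s(a, b) = a ⊓ b := rfl

lemma einf_le_esup (e : Sym2 V) : einf e ≤ esup e := by
  induction e using Sym2.ind with
  | _ a b => exact inf_le_sup

lemma edgeRow_esup (e : Sym2 V) : edgeRow e (esup e) = 1 := by
  simp [edgeRow]

lemma edgeRow_eq_zero_of_gt {e : Sym2 V} {v : V} (h : esup e < v) : edgeRow e v = 0 := by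
  have h1 : v ≠ esup e := ne_of_gt h
  have h2 : v ≠ einf e := ne_of_gt (lt_of_le_of_lt (einf_le_esup e) h)
  simp [edgeRow, h1, h2]

/-- difference of indicator vectors -/
noncomputable def dvec (u w : V) : V → ℚ :=
  fun v => (if v = u then 1 else 0) - (if v = w then 1 else 0)

lemma dvec_self (u : V) : dvec u u = 0 := by
  funext v; simp [dvec]

lemma dvec_swap (u w : V) : dvec w u = -dvec u w := by
  funext v; simp only [dvec, Pi.neg_apply]; ring

lemma dvec_trans (u x w : V) : dvec u w = dvec u x + dvec x w := by
  funext v; simp only [dvec, Pi.add_apply]; ring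

lemma edgeRow_eq_dvec {e : Sym2 V} (h : einf e ≠ esup e) :
    edgeRow e = dvec (esup e) (einf e) := by
  funext v
  unfold edgeRow dvec
  by_cases h1 : v = esup e
  · simp [h1, h.symm, (Ne.symm h)]
  · by_cases h2 : v = einf e
    · simp [h1, h2, h]
    · simp [h1, h2]

lemma dvec_mem_span {A : Set (Sym2 V)} {u w : V} (hmem : s(u, w) ∈ A) (hne : u ≠ w) :
    dvec u w ∈ Submodule.span ℚ (edgeRow '' A) := by
  have hrow : edgeRow s(u, w) ∈ Submodule.span ℚ (edgeRow '' A) :=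
    Submodule.subset_span ⟨s(u, w), hmem, rfl⟩
  rcases lt_or_gt_of_ne hne with hlt | hgt
  · have he : edgeRow s(u, w) = dvec w u := by
      rw [edgeRow_eq_dvec (by simp [esup_mk, einf_mk]; exact hne)]
      simp [esup_mk, einf_mk, sup_eq_right.mpr hlt.le, inf_eq_left.mpr hlt.le]
    have : dvec u w = (-1 : ℚ) • edgeRow s(u, w) := by
      rw [he, dvec_swap u w]; simp
    rw [this]
    exact Submodule.smul_mem _ _ hrow
  · have he : edgeRow s(u, w) = dvec u w := by
      rw [edgeRow_eq_dvec (by simp [esup_mk, einf_mk]; exact hne)]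
      simp [esup_mk, einf_mk, sup_eq_left.mpr hgt.le, inf_eq_right.mpr hgt.le]
    rw [← he]; exact hrow

lemma walk_dvec_mem_span {A : Set (Sym2 V)} :
    ∀ {u w : V}, (SimpleGraph.fromEdgeSet A).Walk u w →
      dvec u w ∈ Submodule.span ℚ (edgeRow '' A) := by
  intro u w p
  induction p with
  | nil => rw [dvec_self]; exact Submodule.zero_mem _
  | @cons u x w hadj p ih =>
    rw [SimpleGraph.fromEdgeSet_adj] at hadj
    have h1 : dvec u x ∈ Submodule.span ℚ (edgeRow '' A) :=
      dvec_mem_span hadj.1 hadj.2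
    rw [dvec_trans u x w]
    exact Submodule.add_mem _ h1 ih

end Aux

/-- Gaussian elimination for the matrix of a flat: if `S ⊆ F` is a spanning forest of `Γ[F]`
with all larger endpoints distinct, then the rows indexed by `F` and by `S` have the same span,
the rows indexed by `S` are linearly independent (so the rank is `|S|`), and (with columns in
decreasing order) the leading entry of the row of `e ∈ S` is a `1` in the pivot column
`h(e)`. -/
theorem stmt_4 {V : Type*} [Fintype V] [LinearOrder V] (G : SimpleGraph V)
    (F S : Finset (Sym2 V)) (hF : ↑F ⊆ G.edgeSet) (hSF : S ⊆ F)
    (hforest : ∀ T ⊆ S, ¬IsCycleEdges G T)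
    (hSspan : SpansFlat (↑F) (↑S : Set (Sym2 V)))
    (hinj : Set.InjOn esup (↑S : Set (Sym2 V))) :
    Submodule.span ℚ (edgeRow '' (↑F : Set (Sym2 V))) =
        Submodule.span ℚ (edgeRow '' (↑S : Set (Sym2 V))) ∧
      LinearIndependent ℚ (fun e : {x // x ∈ S} => edgeRow (e : Sym2 V)) ∧
      Module.finrank ℚ (Submodule.span ℚ (edgeRow '' (↑F : Set (Sym2 V)))) = S.card ∧
      ∀ e ∈ S, edgeRow e (esup e) = 1 ∧ ∀ v : V, esup e < v → edgeRow e v = 0 := by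
  -- span equality
  have hspan : Submodule.span ℚ (edgeRow '' (↑F : Set (Sym2 V))) =
      Submodule.span ℚ (edgeRow '' (↑S : Set (Sym2 V))) := by
    apply le_antisymm
    · rw [Submodule.span_le]
      rintro _ ⟨e, heF, rfl⟩
      induction e using Sym2.ind with
      | _ u w =>
        have hadj : G.Adj u w := (SimpleGraph.mem_edgeSet G).mp (hF heF)
        have hne : u ≠ w := hadj.ne
        have hreach : (SimpleGraph.fromEdgeSet (↑S : Set (Sym2 V))).Reachable u w :=
          hSspan u w heF
        have hne' : einf s(u, w) ≠ esup s(u, w) := by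
          simp [esup_mk, einf_mk]; exact hne
        rw [SetLike.mem_coe, edgeRow_eq_dvec hne']
        rcases le_total u w with hle | hle
        · rw [esup_mk, einf_mk, sup_eq_right.mpr hle, inf_eq_left.mpr hle]
          exact walk_dvec_mem_span hreach.symm.some
        · rw [esup_mk, einf_mk, sup_eq_left.mpr hle, inf_eq_right.mpr hle]
          exact walk_dvec_mem_span hreach.some
    · exact Submodule.span_mono (Set.image_mono (by exact_mod_cast hSF))
  -- linear independence
  have hli : LinearIndependent ℚ (fun e : {x // x ∈ S} => edgeRow (e : Sym2 V)) := by
    rw [linearIndependent_iff']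
    intro s g hsum i hi
    by_contra hgi
    set t := s.filter (fun j => g j ≠ 0) with ht
    have htne : t.Nonempty := ⟨i, Finset.mem_filter.mpr ⟨hi, hgi⟩⟩
    obtain ⟨e, het, hmax⟩ := t.exists_max_image (fun j => esup (j : Sym2 V)) htne
    have heS : (e : Sym2 V) ∈ S := e.2
    have hes : e ∈ s := (Finset.mem_filter.mp het).1
    have hge : g e ≠ 0 := (Finset.mem_filter.mp het).2
    have hval : (∑ j ∈ s, g j • edgeRow (j : Sym2 V)) (esup (e : Sym2 V)) = g e := by
      rw [Finset.sum_apply]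
      rw [Finset.sum_eq_single_of_mem e hes]
      · simp [edgeRow_esup]
      · intro j hjs hje
        by_cases hgj : g j = 0
        · simp [hgj]
        · have hjt : j ∈ t := Finset.mem_filter.mpr ⟨hjs, hgj⟩
          have hle : esup (j : Sym2 V) ≤ esup (e : Sym2 V) := hmax j hjt
          have hne : esup (j : Sym2 V) ≠ esup (e : Sym2 V) := fun h =>
            hje (Subtype.ext (hinj j.2 e.2 h))
          have : esup (j : Sym2 V) < esup (e : Sym2 V) := lt_of_le_of_ne hle hne
          simp [edgeRow_eq_zero_of_gt this]
    rw [hsum] at hval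
    exact hge (by simpa using hval.symm)
  refine ⟨hspan, hli, ?_, ?_⟩
  · rw [hspan]
    have hrange : Set.range (fun e : {x // x ∈ S} => edgeRow (e : Sym2 V)) =
        edgeRow '' (↑S : Set (Sym2 V)) := by
      ext x
      simp [Set.mem_image, Set.mem_range]
    rw [← hrange, finrank_span_eq_card hli, Fintype.card_coe]
  · intro e _
    exact ⟨edgeRow_esup e, fun v hv => edgeRow_eq_zero_of_gt hv⟩
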